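/- Let (Ω, 𝓕, μ) be a probability space and f : Ω → ℝ a measurable function such that ∫ |f|·(1 + e^{-f}) dμ < ∞. Define the probability measure θ₀ by dθ₀ = (e^{-f}/∫ e^{-f} dμ) dμ. Then ∫ f dθ₀ + H(θ₀|μ) = −log ∫ e^{-f} dμ, and θ₀ is the unique minimizer: any probability measure θ ≪ μ with f ∈ L¹(θ) and ∫ f dθ + H(θ|μ) = −log ∫ e^{-f} dμ satisfies θ = θ₀. -/

import Mathlib

open MeasureTheory Filter
open scoped Classical
open scoped NNReal ENNReal

/-- Relative entropy (Kullback–Leibler divergence) `H(θ|μ)`, valued in the extended reals: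
`H(θ|μ) = ∫ (dθ/dμ)·log(dθ/dμ) dμ` if `θ ≪ μ` and this integral is defined, `+∞` otherwise. -/
noncomputable def relEntropy {Ω : Type*} [MeasurableSpace Ω] (θ μ : Measure Ω) : EReal :=
  if θ ≪ μ ∧ Integrable (fun x => (θ.rnDeriv μ x).toReal * Real.log (θ.rnDeriv μ x).toReal) μ
  then ((∫ x, (θ.rnDeriv μ x).toReal * Real.log (θ.rnDeriv μ x).toReal ∂μ : ℝ) : EReal)
  else ⊤

lemma aux_nonneg {a b : ℝ} (ha : 0 ≤ a) (hb : 0 < b) :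
    0 ≤ a * Real.log (a / b) - a + b := by
  rcases ha.eq_or_lt with h | h
  · simp [← h]; linarith
  · have hba : 0 < b / a := div_pos hb h
    have h1 := Real.log_le_sub_one_of_pos hba
    have hlog : Real.log (b / a) = - Real.log (a / b) := by
      rw [← Real.log_inv, inv_div]
    have hba' : a * (b / a) = b := by field_simp
    nlinarith

lemma aux_eq {a b : ℝ} (ha : 0 ≤ a) (hb : 0 < b)
    (h0 : a * Real.log (a / b) - a + b = 0) : a = b := by
  rcases ha.eq_or_lt with h | h
  · exfalso; simp [← h] at h0; linarith
  · by_contra hne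
    have hba : 0 < b / a := div_pos hb h
    have hne1 : b / a ≠ 1 := by
      intro hh
      apply hne
      field_simp at hh
      linarith
    have h1 := Real.log_lt_sub_one_of_pos hba hne1
    have hlog : Real.log (b / a) = - Real.log (a / b) := by
      rw [← Real.log_inv, inv_div]
    have hba' : a * (b / a) = b := by field_simp
    nlinarith

theorem stmt_1 {Ω : Type*} [MeasurableSpace Ω] (μ : Measure Ω) [IsProbabilityMeasure μ]
    (f : Ω → ℝ) (hf : Measurable f)
    (hint : Integrable (fun x => |f x| * (1 + Real.exp (-f x))) μ)
    (θ₀ : Measure Ω)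
    (hθ₀ : θ₀ = μ.withDensity
      (fun x => ENNReal.ofReal (Real.exp (-f x) / ∫ y, Real.exp (-f y) ∂μ))) :
    (((∫ x, f x ∂θ₀ : ℝ) : EReal) + relEntropy θ₀ μ =
        ((-Real.log (∫ x, Real.exp (-f x) ∂μ) : ℝ) : EReal)) ∧
      ∀ θ : Measure Ω, IsProbabilityMeasure θ → θ ≪ μ → Integrable f θ →
        (((∫ x, f x ∂θ : ℝ) : EReal) + relEntropy θ μ =
          ((-Real.log (∫ x, Real.exp (-f x) ∂μ) : ℝ) : EReal)) →
        θ = θ₀ := by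
  set Z : ℝ := ∫ y, Real.exp (-f y) ∂μ with hZ
  -- basic integrability facts
  have hexp : Integrable (fun x => Real.exp (-f x)) μ := by
    refine (hint.add (integrable_const (Real.exp 1))).mono'
      ((Real.measurable_exp.comp hf.neg).aestronglyMeasurable) ?_
    filter_upwards with x
    have he : 0 < Real.exp (-f x) := Real.exp_pos _
    have habs : 0 ≤ |f x| := abs_nonneg _
    rw [Real.norm_eq_abs, abs_of_pos he]
    simp only [Pi.add_apply]
    rcases le_or_gt (-f x) 1 with h1 | h1
    · have : Real.exp (-f x) ≤ Real.exp 1 := Real.exp_le_exp.mpr h1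
      nlinarith
    · have h2 : 1 ≤ |f x| := le_abs.mpr (Or.inr (by linarith))
      nlinarith [mul_nonneg (sub_nonneg.mpr h2) he.le, (Real.exp_pos 1).le]
  have hZpos : 0 < Z := integral_exp_pos hexp
  have hfint : Integrable f μ := by
    refine hint.mono' hf.aestronglyMeasurable ?_
    filter_upwards with x
    have he : 0 < Real.exp (-f x) := Real.exp_pos _
    rw [Real.norm_eq_abs]
    nlinarith [abs_nonneg (f x), mul_nonneg (abs_nonneg (f x)) he.le]
  have hfexp : Integrable (fun x => f x * Real.exp (-f x)) μ := by
    refine hint.mono' (hf.mul (Real.measurable_exp.comp hf.neg)).aestronglyMeasurable ?_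
    filter_upwards with x
    have he : 0 < Real.exp (-f x) := Real.exp_pos _
    rw [Real.norm_eq_abs, abs_mul, abs_of_pos he]
    nlinarith [abs_nonneg (f x), mul_nonneg (abs_nonneg (f x)) he.le]
  set g : Ω → ℝ := fun x => Real.exp (-f x) / Z with hg
  have hgmeas : Measurable g := (Real.measurable_exp.comp hf.neg).div_const Z
  have hgpos : ∀ x, 0 < g x := fun x => div_pos (Real.exp_pos _) hZpos
  have hgint : Integrable g μ := hexp.div_const Z
  have hg1 : ∫ x, g x ∂μ = 1 := by
    rw [hg]
    simp only [integral_div]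
    exact div_self hZpos.ne'
  have hfg : Integrable (fun x => f x * g x) μ := by
    refine (hfexp.div_const Z).congr (Eventually.of_forall fun x => ?_)
    rw [hg]; ring
  have hloggeq : ∀ x, Real.log (g x) = -f x - Real.log Z := by
    intro x
    rw [hg]
    simp only
    rw [Real.log_div (Real.exp_pos _).ne' hZpos.ne', Real.log_exp]
  -- facts about θ₀
  have hθ₀ac : θ₀ ≪ μ := hθ₀ ▸ withDensity_absolutelyContinuous μ _
  have hrn : θ₀.rnDeriv μ =ᵐ[μ] fun x => ENNReal.ofReal (g x) := by
    rw [hθ₀]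
    exact Measure.rnDeriv_withDensity μ (measurable_coe_nnreal_ennreal.comp
      (hgmeas.real_toNNReal))
  have hrnr : (fun x => (θ₀.rnDeriv μ x).toReal) =ᵐ[μ] g := by
    filter_upwards [hrn] with x hx
    rw [hx, ENNReal.toReal_ofReal (hgpos x).le]
  have hfθ₀ : ∫ x, f x ∂θ₀ = ∫ x, f x * g x ∂μ := by
    rw [hθ₀]
    rw [show (fun x => ENNReal.ofReal (Real.exp (-f x) / Z)) =
        fun x => ((Real.toNNReal (g x) : ℝ≥0) : ℝ≥0∞) from rfl]
    rw [integral_withDensity_eq_integral_smul hgmeas.real_toNNReal f]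
    refine integral_congr_ae (Eventually.of_forall fun x => ?_)
    simp [NNReal.smul_def, Real.coe_toNNReal _ (hgpos x).le, mul_comm]
  -- the entropy integrand for θ₀
  have htarget : Integrable (fun x => g x * (-f x - Real.log Z)) μ := by
    have h1 : Integrable (fun x => -(f x * Real.exp (-f x) / Z) - Real.log Z * g x) μ :=
      (hfexp.div_const Z).neg.sub (hgint.const_mul (Real.log Z))
    refine h1.congr (Eventually.of_forall fun x => ?_)
    rw [hg]; ring
  have haeq : (fun x => (θ₀.rnDeriv μ x).toReal * Real.log (θ₀.rnDeriv μ x).toReal)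
      =ᵐ[μ] fun x => g x * (-f x - Real.log Z) := by
    filter_upwards [hrnr] with x hx
    rw [hx, hloggeq x]
  have hE : relEntropy θ₀ μ = ((∫ x, g x * (-f x - Real.log Z) ∂μ : ℝ) : EReal) := by
    rw [relEntropy, if_pos ⟨hθ₀ac, htarget.congr haeq.symm⟩]
    exact congrArg _ (integral_congr_ae haeq)
  have hent : ∫ x, g x * (-f x - Real.log Z) ∂μ
      = - ∫ x, f x * g x ∂μ - Real.log Z := by
    have : ∫ x, g x * (-f x - Real.log Z) ∂μ
        = ∫ x, (-(f x * g x) - Real.log Z * g x) ∂μ := by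
      refine integral_congr_ae (Eventually.of_forall fun x => ?_)
      ring
    have hA : Integrable (fun x => -(f x * g x)) μ := hfg.neg
    have hB : Integrable (fun x => Real.log Z * g x) μ := hgint.const_mul _
    rw [this, integral_sub hA hB, integral_neg, integral_const_mul, hg1]
    ring
  constructor
  · rw [hE, hfθ₀, ← EReal.coe_add]
    norm_cast
    rw [hent]
    ring
  · -- uniqueness
    intro θ hθp hθac hfθ heq
    have hne : relEntropy θ μ ≠ ⊤ := by
      intro htop
      rw [htop, EReal.coe_add_top] at heq
      exact EReal.top_ne_coe _ heq
    have hcond : θ ≪ μ ∧ Integrable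
        (fun x => (θ.rnDeriv μ x).toReal * Real.log (θ.rnDeriv μ x).toReal) μ := by
      by_contra hc
      exact hne (by rw [relEntropy, if_neg hc])
    obtain ⟨-, hInt⟩ := hcond
    have heq' : (∫ x, f x ∂θ) + ∫ x, (θ.rnDeriv μ x).toReal *
        Real.log (θ.rnDeriv μ x).toReal ∂μ = -Real.log Z := by
      rw [relEntropy, if_pos ⟨hθac, hInt⟩, ← EReal.coe_add] at heq
      exact_mod_cast heq
    set h : Ω → ℝ := fun x => (θ.rnDeriv μ x).toReal with hh
    have hhnn : ∀ x, 0 ≤ h x := fun x => ENNReal.toReal_nonneg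
    have hhint : Integrable h μ := Measure.integrable_toReal_rnDeriv
    have hh1 : ∫ x, h x ∂μ = 1 := by
      rw [hh]
      rw [Measure.integral_toReal_rnDeriv hθac]
      simp
    have hfh : Integrable (fun x => h x * f x) μ := by
      have := (integrable_rnDeriv_smul_iff hθac (f := f)).mpr hfθ
      simpa [smul_eq_mul] using this
    have hfθeq : ∫ x, f x ∂θ = ∫ x, h x * f x ∂μ := by
      rw [← integral_rnDeriv_smul hθac (f := f)]
      simp [smul_eq_mul, hh]
    -- the key nonnegative function
    set φ : Ω → ℝ := fun x => h x * Real.log (h x / g x) - h x + g x with hφ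
    have hφeq : ∀ x, φ x = h x * Real.log (h x) + h x * f x
        + Real.log Z * h x - h x + g x := by
      intro x
      rcases (hhnn x).eq_or_lt with h0 | h0
      · simp [hφ, ← h0]
      · rw [hφ]
        simp only
        rw [Real.log_div h0.ne' (hgpos x).ne', hloggeq x]
        ring
    have hI1 : Integrable (fun x => h x * Real.log (h x) + h x * f x) μ := hInt.add hfh
    have hI2 : Integrable (fun x => h x * Real.log (h x) + h x * f x
        + Real.log Z * h x) μ := hI1.add (hhint.const_mul _)
    have hI3 : Integrable (fun x => h x * Real.log (h x) + h x * f x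
        + Real.log Z * h x - h x) μ := hI2.sub hhint
    have hI4 : Integrable (fun x => h x * Real.log (h x) + h x * f x
        + Real.log Z * h x - h x + g x) μ := hI3.add hgint
    have hφint : Integrable φ μ :=
      hI4.congr (Eventually.of_forall fun x => (hφeq x).symm)
    have hφ0 : ∫ x, φ x ∂μ = 0 := by
      have : ∫ x, φ x ∂μ = ∫ x, (h x * Real.log (h x) + h x * f x
          + Real.log Z * h x - h x + g x) ∂μ :=
        integral_congr_ae (Eventually.of_forall fun x => hφeq x)
      rw [this, integral_add hI3 hgint, integral_sub hI2 hhint,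
        integral_add hI1 (hhint.const_mul _),
        integral_add hInt hfh, integral_const_mul, hh1, hg1, ← hfθeq]
      linarith
    have hφz : φ =ᵐ[μ] 0 := by
      rw [← integral_eq_zero_iff_of_nonneg (fun x => aux_nonneg (hhnn x) (hgpos x)) hφint]
      exact hφ0
    have hhg : (fun x => θ.rnDeriv μ x) =ᵐ[μ] fun x => ENNReal.ofReal (g x) := by
      filter_upwards [hφz, Measure.rnDeriv_lt_top θ μ] with x hx hlt
      have : h x = g x := aux_eq (hhnn x) (hgpos x) hx
      rw [← this, hh]
      simp only
      rw [ENNReal.ofReal_toReal hlt.ne]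
    calc θ = μ.withDensity (θ.rnDeriv μ) := (Measure.withDensity_rnDeriv_eq θ μ hθac).symm
      _ = μ.withDensity (fun x => ENNReal.ofReal (g x)) := withDensity_congr_ae hhg
      _ = θ₀ := hθ₀.symm
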